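/- Let π be a play in the expanded game G' from (s_init, 0) with MPsup(π) ≤ t, and let (γ_i)_{i≥0} be its configuration sequence with γ_i = (s_i, c_i). Then there exist 1 ≤ i ≤ j such that the infix π_{[i,j]} is a good cycle, i.e., γ_{i−1} = γ_j, c_{i−1} ≤ t, and (1/(j−i+1)) Σ_{k=i}^{j} c_k ≤ t. -/

import Mathlib

namespace AvgEnergy

/-- An integer-weighted edge over a state space `α`. -/
abbrev WEdge (α : Type*) : Type _ := α × ℤ × α

/-- A finite turn-based weighted game `G = (S₀, S₁, E)`:
`S₀` and `S₁` are disjoint sets of states covering `S`, edges carry integer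
weights bounded in absolute value by `W`, and every state has an outgoing edge. -/
structure Game (S : Type*) where
  S0 : Set S
  S1 : Set S
  E : Set (WEdge S)
  W : ℕ
  disj : Disjoint S0 S1
  cover : S0 ∪ S1 = Set.univ
  wbound : ∀ e ∈ E, -(W : ℤ) ≤ e.2.1 ∧ e.2.1 ≤ (W : ℤ)
  total : ∀ s : S, ∃ w s', (s, w, s') ∈ E

variable {α : Type*}

/-- A play from `s`: an infinite sequence of consecutive edges of `E` starting at `s`. -/
def IsPlay (E : Set (WEdge α)) (s : α) (π : ℕ → WEdge α) : Prop :=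
  (∀ i, π i ∈ E) ∧ (π 0).1 = s ∧ ∀ i, (π i).2.2 = (π (i + 1)).1

/-- Energy level of the length-`n` prefix of `π`. -/
def EL (π : ℕ → WEdge α) (n : ℕ) : ℤ :=
  ∑ i ∈ Finset.range n, (π i).2.1

/-- Mean-payoff of the length-`n` prefix of `π`. -/
def MP (π : ℕ → WEdge α) (n : ℕ) : ℚ := (EL π n : ℚ) / n

/-- Average-energy of the length-`n` prefix of `π`. -/
def AE (π : ℕ → WEdge α) (n : ℕ) : ℚ :=
  (∑ i ∈ Finset.range n, (EL π (i + 1) : ℚ)) / n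

/-- `limsup_{n → ∞} f n ≤ t` (ε-characterization, valid in `ℚ`). -/
def LimsupLE (f : ℕ → ℚ) (t : ℚ) : Prop :=
  ∀ ε : ℚ, 0 < ε → ∃ N, ∀ n ≥ N, f n ≤ t + ε

/-- The state reached after following the finite prefix `ρ` from `s`. -/
def EndSt (s : α) (ρ : List (WEdge α)) : α :=
  (ρ.getLast?.map (fun e => e.2.2)).getD s

/-- `ρ` is a finite play prefix from `s` in the graph with edge set `E`. -/
def IsPrefixFrom (E : Set (WEdge α)) (s : α) (ρ : List (WEdge α)) : Prop :=
  (∀ e ∈ ρ, e ∈ E) ∧ List.Chain' (fun e f => e.2.2 = f.1) ρ ∧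
    ∀ e, ρ.head? = some e → e.1 = s

/-- A strategy (of the player owning the states in `S0`) from `s`: it assigns to every
play prefix from `s` ending in a state of `S0` a valid outgoing edge. -/
def IsStrategy (E : Set (WEdge α)) (S0 : Set α) (s : α)
    (σ : List (WEdge α) → WEdge α) : Prop :=
  ∀ ρ, IsPrefixFrom E s ρ → EndSt s ρ ∈ S0 → σ ρ ∈ E ∧ (σ ρ).1 = EndSt s ρ

/-- The length-`n` prefix of a play, as a list of edges. -/
def Pref (π : ℕ → WEdge α) (n : ℕ) : List (WEdge α) :=
  List.ofFn (fun i : Fin n => π i)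

/-- `π` is an outcome of the strategy `σ` (for the player owning `S0`) from `s`. -/
def IsOutcome (E : Set (WEdge α)) (S0 : Set α) (s : α)
    (σ : List (WEdge α) → WEdge α) (π : ℕ → WEdge α) : Prop :=
  IsPlay E s π ∧ ∀ n, EndSt s (Pref π n) ∈ S0 → π n = σ (Pref π n)

/-- Configurations of the expanded game: `⊥` is `none`. -/
abbrev Conf (S : Type*) := Option (S × ℕ)

/-- Edges of the expanded infinite-state weighted game `G'`:
`((s,c), c', (s',c'))` whenever `(s,w,s') ∈ E` and `c' = c + w ≥ 0`;
`((s,c), ⌈t⌉+1, ⊥)` whenever some `(s,w,s') ∈ E` has `c + w < 0`; and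
`(⊥, ⌈t⌉+1, ⊥)`. -/
def ExpE {S : Type*} (G : Game S) (t : ℚ) : Set (WEdge (Conf S)) :=
  {e | (∃ (s : S) (c : ℕ) (w : ℤ) (s' : S) (c' : ℕ), (s, w, s') ∈ G.E ∧ (c : ℤ) + w = (c' : ℤ) ∧
          e = (some (s, c), (c' : ℤ), some (s', c'))) ∨
       (∃ (s : S) (c : ℕ) (w : ℤ) (s' : S), (s, w, s') ∈ G.E ∧ (c : ℤ) + w < 0 ∧
          e = (some (s, c), ⌈t⌉ + 1, (none : Conf S))) ∨
       e = ((none : Conf S), ⌈t⌉ + 1, (none : Conf S))}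

/-- The configurations of the expanded game belonging to player `P₀`. -/
def ExpS0 {S : Type*} (G : Game S) : Set (Conf S) :=
  {γ | ∃ s c, s ∈ G.S0 ∧ γ = some (s, c)}

/-- The state (configuration) visited at position `n` along a play from `s`:
`γ₀ = s` and `γ_{n+1}` is the target of the `(n+1)`-st edge. -/
def StAt (s : α) (π : ℕ → WEdge α) : ℕ → α
  | 0 => s
  | n + 1 => (π n).2.2

end AvgEnergy

namespace AvgEnergy

set_option maxHeartbeats 1000000

private lemma sum_shift (g : ℕ → ℚ) (n : ℕ) :
    ∑ i ∈ Finset.range n, g (i + 1) = ∑ k ∈ Finset.Ioc 0 n, g k := by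
  induction n with
  | zero => simp
  | succ n ih =>
      rw [Finset.sum_range_succ, ih, ← Finset.Icc_add_one_left_eq_Ioc, ← Finset.Icc_add_one_left_eq_Ioc,
        Finset.sum_Icc_succ_top (show 0 + 1 ≤ n + 1 by omega)]


private lemma gap (t : ℚ) (A L : ℕ) (h : t * L < A) : t * L + 1 / t.den ≤ A := by
  have hd : (0 : ℚ) < t.den := by exact_mod_cast t.pos
  have hq : t * t.den = t.num := Rat.mul_den_eq_num t
  have h2 : (t.num : ℚ) * L < (A : ℚ) * t.den := by
    have := mul_lt_mul_of_pos_right h hd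
    nlinarith
  have h3 : t.num * (L : ℤ) + 1 ≤ (A : ℤ) * t.den := by
    have : t.num * (L : ℤ) < (A : ℤ) * t.den := by exact_mod_cast h2
    omega
  have h4 : (t.num : ℚ) * L + 1 ≤ (A : ℚ) * t.den := by exact_mod_cast h3
  rw [← mul_le_mul_iff_of_pos_right hd]
  have : (t * L + 1 / t.den) * t.den = t.num * L + 1 := by
    field_simp
    nlinarith
  rw [this]
  exact h4


private lemma chain {β : Type*} [DecidableEq β] (f : ℕ → β) (c : ℕ → ℕ) (t : ℚ) (y : β × ℕ)
    (hy : (y.2 : ℚ) ≤ t)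
    (hbad : ∀ a b : ℕ, a < b → f a = f b → c a = c b → (c a : ℚ) ≤ t →
      t * ((b : ℚ) - a) < ∑ k ∈ Finset.Ioc a b, (c k : ℚ)) :
    ∀ b a : ℕ, (f a, c a) = y → (f b, c b) = y → a ≤ b →
      t * ((b : ℚ) - a)
          + ((Finset.Ioc a b).filter (fun k => (f k, c k) = y)).card / t.den
        ≤ ∑ k ∈ Finset.Ioc a b, (c k : ℚ) := by
  intro b
  induction b using Nat.strong_induction_on with
  | _ b IH =>
    intro a ha hb hab
    rcases eq_or_lt_of_le hab with rfl | hlt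
    · simp
    -- a < b
    have hA : a ∈ (Finset.Icc a (b - 1)).filter (fun k => (f k, c k) = y) := by
      simp only [Finset.mem_filter, Finset.mem_Icc]
      exact ⟨⟨le_refl a, by omega⟩, ha⟩
    set A := (Finset.Icc a (b - 1)).filter (fun k => (f k, c k) = y) with hAdef
    have hAne : A.Nonempty := ⟨a, hA⟩
    set a' := A.max' hAne with ha'def
    have ha'mem : a' ∈ A := A.max'_mem hAne
    have ha'y : (f a', c a') = y := (Finset.mem_filter.mp ha'mem).2
    have ha'le : a ≤ a' ∧ a' ≤ b - 1 := Finset.mem_Icc.mp (Finset.mem_filter.mp ha'mem).1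
    have ha'b : a' < b := by omega
    have hnone : ∀ k, a' < k → k < b → (f k, c k) ≠ y := by
      intro k hk1 hk2 hk3
      have : k ∈ A := by
        simp only [hAdef, Finset.mem_filter, Finset.mem_Icc]
        exact ⟨⟨by omega, by omega⟩, hk3⟩
      exact absurd (A.le_max' k this) (by omega)
    -- bad cycle from a' to b
    have hca' : (c a' : ℚ) ≤ t := by
      have : c a' = y.2 := congrArg Prod.snd ha'y
      rw [this]; exact hy
    have hbad' := hbad a' b ha'b
      (by have h1 := congrArg Prod.fst ha'y; have h2 := congrArg Prod.fst hb; simp at h1 h2; rw [h1, h2])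
      (by have h1 := congrArg Prod.snd ha'y; have h2 := congrArg Prod.snd hb; simp at h1 h2; rw [h1, h2])
      hca'
    have hsum_eq : ∑ k ∈ Finset.Ioc a' b, (c k : ℚ) = ((∑ k ∈ Finset.Ioc a' b, c k : ℕ) : ℚ) := by
      push_cast; ring
    have hgap : t * ((b : ℚ) - a') + 1 / t.den ≤ ∑ k ∈ Finset.Ioc a' b, (c k : ℚ) := by
      have hcast : ((b - a' : ℕ) : ℚ) = (b : ℚ) - a' := by
        push_cast [Nat.cast_sub (le_of_lt ha'b)]; ring
      have := gap t (∑ k ∈ Finset.Ioc a' b, c k) (b - a') (by rw [hcast, ← hsum_eq]; exact hbad')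
      rw [hcast, ← hsum_eq] at this
      exact this
    -- IH on (a, a']
    have hIH := IH a' ha'b a ha ha'y ha'le.1
    -- cardinality bound
    have hcard : ((Finset.Ioc a b).filter (fun k => (f k, c k) = y)).card
        ≤ ((Finset.Ioc a a').filter (fun k => (f k, c k) = y)).card + 1 := by
      have hsub : (Finset.Ioc a b).filter (fun k => (f k, c k) = y)
          ⊆ insert b ((Finset.Ioc a a').filter (fun k => (f k, c k) = y)) := by
        intro k hk
        simp only [Finset.mem_filter, Finset.mem_Ioc] at hk
        rcases eq_or_lt_of_le hk.1.2 with rfl | hkb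
        · exact Finset.mem_insert_self _ _
        · apply Finset.mem_insert_of_mem
          simp only [Finset.mem_filter, Finset.mem_Ioc]
          refine ⟨⟨hk.1.1, ?_⟩, hk.2⟩
          by_contra hka'
          exact hnone k (by omega) hkb hk.2
      calc _ ≤ (insert b ((Finset.Ioc a a').filter (fun k => (f k, c k) = y))).card :=
            Finset.card_le_card hsub
        _ ≤ _ := Finset.card_insert_le _ _
    -- sum split
    have hsplit : ∑ k ∈ Finset.Ioc a a', (c k : ℚ) + ∑ k ∈ Finset.Ioc a' b, (c k : ℚ)
        = ∑ k ∈ Finset.Ioc a b, (c k : ℚ) :=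
      Finset.sum_Ioc_consecutive _ ha'le.1 (le_of_lt ha'b)
    have hd : (0 : ℚ) < t.den := by exact_mod_cast t.pos
    have hcardQ : (((Finset.Ioc a b).filter (fun k => (f k, c k) = y)).card : ℚ)
        ≤ (((Finset.Ioc a a').filter (fun k => (f k, c k) = y)).card : ℚ) + 1 := by
      exact_mod_cast hcard
    rw [← hsplit]
    have : (((Finset.Ioc a b).filter (fun k => (f k, c k) = y)).card : ℚ) / t.den
        ≤ (((Finset.Ioc a a').filter (fun k => (f k, c k) = y)).card : ℚ) / t.den + 1 / t.den := by
      rw [← add_div]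
      exact div_le_div_of_nonneg_right hcardQ hd.le
    nlinarith [hIH, hgap]


private lemma pigeon {β : Type*} [DecidableEq β] {s : Finset ℕ} {T : Finset β} (g : ℕ → β)
    (hmap : ∀ k ∈ s, g k ∈ T) (hs : s.Nonempty) :
    ∃ y ∈ T, s.card ≤ T.card * (s.filter (fun k => g k = y)).card := by
  by_contra h
  push_neg at h
  have hsum : ∑ y ∈ T, (s.filter (fun k => g k = y)).card = s.card :=
    (Finset.card_eq_sum_card_fiberwise hmap).symm
  have hTne : T.Nonempty := ⟨g hs.choose, hmap _ hs.choose_spec⟩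
  have h2 : T.card * s.card ≤ ∑ y ∈ T, (T.card * (s.filter (fun k => g k = y)).card) := by
    rw [← Finset.mul_sum, hsum]
  have h3 : ∑ y ∈ T, (T.card * (s.filter (fun k => g k = y)).card)
      ≤ ∑ _y ∈ T, (s.card - 1) := by
    apply Finset.sum_le_sum
    intro y hyT
    have := h y hyT
    omega
  rw [Finset.sum_const, smul_eq_mul] at h3
  have hscard : 1 ≤ s.card := Finset.card_pos.mpr hs
  have hTcard : 1 ≤ T.card := Finset.card_pos.mpr hTne
  obtain ⟨m, hm⟩ : ∃ m, s.card = m + 1 := ⟨s.card - 1, by omega⟩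
  have h4 := h2.trans h3
  rw [hm] at h4
  have h5 : T.card * (m + 1) = T.card * m + T.card := by ring
  simp only [Nat.add_sub_cancel] at h4
  omega


private lemma core {β : Type*} [Fintype β] (f : ℕ → β) (c : ℕ → ℕ) (t : ℚ) (ht : 0 ≤ t)
    (hmp : ∀ ε : ℚ, 0 < ε → ∃ N, ∀ n ≥ N, (∑ k ∈ Finset.Ioc 0 n, (c k : ℚ)) ≤ (t + ε) * n) :
    ∃ a b : ℕ, a < b ∧ f a = f b ∧ c a = c b ∧ (c a : ℚ) ≤ t ∧
      (∑ k ∈ Finset.Ioc a b, (c k : ℚ)) ≤ t * ((b : ℚ) - a) := by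
  classical
  by_contra hno
  push_neg at hno
  have hbad : ∀ a b : ℕ, a < b → f a = f b → c a = c b → (c a : ℚ) ≤ t →
      t * ((b : ℚ) - a) < ∑ k ∈ Finset.Ioc a b, (c k : ℚ) := hno
  set d : ℚ := (t.den : ℚ) with hddef
  have hdn : 1 ≤ t.den := t.pos
  have hd : (0 : ℚ) < d := by rw [hddef]; exact_mod_cast t.pos
  have hd1 : (1 : ℚ) ≤ d := by rw [hddef]; exact_mod_cast hdn
  -- low predicate and counting
  set L : ℕ → ℕ := fun n => ((Finset.Ioc 0 n).filter (fun k => (c k : ℚ) ≤ t)).card with hLdef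
  set δ : ℚ := 1 / (2 * d * t + 2) with hδdef
  have hδpos : 0 < δ := by
    rw [hδdef]; positivity
  -- Step 1: density
  obtain ⟨N₀, hN₀⟩ := hmp (1 / (2 * d)) (by positivity)
  have density : ∀ n, N₀ ≤ n → δ * n ≤ L n := by
    intro n hn
    have hsplit := Finset.sum_filter_add_sum_filter_not (Finset.Ioc 0 n)
      (fun k => (c k : ℚ) ≤ t) (fun k => (c k : ℚ))
    have hlow0 : 0 ≤ ∑ k ∈ (Finset.Ioc 0 n).filter (fun k => (c k : ℚ) ≤ t), (c k : ℚ) :=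
      Finset.sum_nonneg fun k _ => by positivity
    have hhigh : ((Finset.Ioc 0 n).filter (fun k => ¬ (c k : ℚ) ≤ t)).card • (t + 1 / d)
        ≤ ∑ k ∈ (Finset.Ioc 0 n).filter (fun k => ¬ (c k : ℚ) ≤ t), (c k : ℚ) := by
      apply Finset.card_nsmul_le_sum
      intro k hk
      have hk2 := (Finset.mem_filter.mp hk).2
      push_neg at hk2
      have := gap t (c k) 1 (by push_cast; linarith)
      push_cast at this ⊢
      rw [hddef]
      linarith
    have hcards : ((Finset.Ioc 0 n).filter (fun k => (c k : ℚ) ≤ t)).card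
        + ((Finset.Ioc 0 n).filter (fun k => ¬ (c k : ℚ) ≤ t)).card = n := by
      rw [Finset.card_filter_add_card_filter_not, Nat.card_Ioc]
      omega
    have hub := hN₀ n hn
    set H := ((Finset.Ioc 0 n).filter (fun k => ¬ (c k : ℚ) ≤ t)).card with hHdef
    have hHcast : (H : ℚ) = (n : ℚ) - (L n : ℚ) := by
      have hq : ((L n + H : ℕ) : ℚ) = (n : ℚ) := by rw [hcards]
      push_cast at hq
      linarith
    have hhigh' : (H : ℚ) * (t + 1/d) ≤ ∑ k ∈ (Finset.Ioc 0 n).filter (fun k => ¬ (c k : ℚ) ≤ t), (c k : ℚ) := by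
      rw [← nsmul_eq_mul]; exact hhigh
    have hkey : ((n : ℚ) - L n) * (t + 1 / d) ≤ (t + 1 / (2 * d)) * n := by
      rw [← hHcast]
      linarith [hhigh', hlow0, hub, hsplit]
    -- derive δ * n ≤ L n
    have hn0 : (0 : ℚ) ≤ n := by positivity
    have hL0 : (0 : ℚ) ≤ L n := by positivity
    rw [hδdef, div_mul_eq_mul_div, div_le_iff₀ (by nlinarith)]
    have h1 : (n : ℚ) * (1 / d) - (n : ℚ) * (1 / (2 * d)) ≤ (L n : ℚ) * (t + 1 / d) := by
      nlinarith
    have hiden : (n : ℚ) * (1/d) - n * (1/(2*d)) = n * (1/(2*d)) := by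
      field_simp
      ring
    have h2 : (n : ℚ) * (1 / (2 * d)) ≤ (L n : ℚ) * (t + 1 / d) := by
      linarith [h1, hiden]
    calc (1:ℚ) * n = 2 * d * (n * (1 / (2*d))) := by
          field_simp
      _ ≤ 2 * d * ((L n : ℚ) * (t + 1/d)) := by nlinarith
      _ = (L n : ℚ) * (2 * d * t + 2) := by
          field_simp
  -- finite set of low configurations
  have hβ : Nonempty β := ⟨f 0⟩
  set M : ℕ := ⌊t⌋.toNat + 1 with hMdef
  set T : Finset (β × ℕ) := Finset.univ ×ˢ Finset.range M with hTdef
  set K : ℕ := T.card with hKdef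
  have hTne : T.Nonempty := ⟨(f 0, 0), by
    rw [hTdef]
    exact Finset.mem_product.mpr ⟨Finset.mem_univ _, Finset.mem_range.mpr (by omega)⟩⟩
  have hK1 : 1 ≤ K := Finset.card_pos.mpr hTne
  have hKQ : (1 : ℚ) ≤ K := by exact_mod_cast hK1
  have hKQ0 : (0 : ℚ) < K := by linarith
  have hmapsto : ∀ n, ∀ k ∈ (Finset.Ioc 0 n).filter (fun k => (c k : ℚ) ≤ t),
      (f k, c k) ∈ T := by
    intro n k hk
    have hk2 := (Finset.mem_filter.mp hk).2
    have h1 : (c k : ℤ) ≤ ⌊t⌋ := Int.le_floor.mpr (by push_cast; exact hk2)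
    have h2 : (⌊t⌋ : ℤ) ≤ (⌊t⌋.toNat : ℤ) := Int.self_le_toNat _
    have h3 : c k ≤ ⌊t⌋.toNat := by exact_mod_cast h1.trans h2
    rw [hTdef]
    exact Finset.mem_product.mpr ⟨Finset.mem_univ _, Finset.mem_range.mpr (by omega)⟩
  obtain ⟨N₁, hN₁⟩ := hmp (δ / (2 * d * K)) (by positivity)
  set ε₁ : ℚ := δ / (2 * d * K) with hε₁def
  have hdε₁ : d * ε₁ = δ / (2 * K) := by
    rw [hε₁def]
    field_simp
  -- per-y refutation
  have main : ∀ y : β × ℕ, ∃ Ny : ℕ, ∀ n, Ny ≤ n → N₀ ≤ n →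
      ¬ (L n ≤ K * ((((Finset.Ioc 0 n).filter (fun k => (c k : ℚ) ≤ t)).filter
          (fun k => (f k, c k) = y)).card)) := by
    intro y
    by_cases hocc : ∃ k, (f k, c k) = y ∧ (c k : ℚ) ≤ t
    case neg =>
      -- fiber always empty; refute using L n ≥ 1
      refine ⟨⌈1/δ⌉₊, fun n hn1 hn0 hcon => ?_⟩
      have hfib : (((Finset.Ioc 0 n).filter (fun k => (c k : ℚ) ≤ t)).filter
          (fun k => (f k, c k) = y)) = ∅ := by
        apply Finset.filter_false_of_mem
        intro k hk
        exact fun hky => hocc ⟨k, hky, (Finset.mem_filter.mp hk).2⟩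
      rw [hfib] at hcon
      simp at hcon
      have hδn : (1 : ℚ) ≤ δ * n := by
        have h1 : (1/δ : ℚ) ≤ n := (Nat.ceil_le.mp hn1)
        have := (div_le_iff₀ hδpos).mp h1
        linarith [mul_comm δ (n : ℚ)]
      have := density n hn0
      rw [hcon] at this
      push_cast at this
      linarith
    case pos =>
      set p0 := Nat.find hocc with hp0def
      obtain ⟨hp0y, hp0low⟩ := Nat.find_spec hocc
      refine ⟨max ⌈1/δ⌉₊ (max ⌈(K * N₁ : ℚ)/δ⌉₊ ⌈((d * t * p0 + 1) * (2 * K) + 1)/δ⌉₊),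
        fun n hn1 hn0 hcon => ?_⟩
      rw [max_le_iff, max_le_iff] at hn1
      have hnQ1 : (1/δ : ℚ) ≤ n := Nat.ceil_le.mp hn1.1
      have hnQ2 : ((K * N₁ : ℚ)/δ) ≤ n := Nat.ceil_le.mp hn1.2.1
      have hnQ3 : (((d * t * p0 + 1) * (2 * K) + 1)/δ) ≤ n := Nat.ceil_le.mp hn1.2.2
      have hδn1 : (1 : ℚ) ≤ δ * n := by
        have := (div_le_iff₀ hδpos).mp hnQ1
        linarith [mul_comm δ (n : ℚ)]
      have hδn2 : (K * N₁ : ℚ) ≤ δ * n := by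
        have := (div_le_iff₀ hδpos).mp hnQ2
        linarith [mul_comm δ (n : ℚ)]
      have hδn3 : ((d * t * p0 + 1) * (2 * K) + 1 : ℚ) ≤ δ * n := by
        have := (div_le_iff₀ hδpos).mp hnQ3
        linarith [mul_comm δ (n : ℚ)]
      set fib := (((Finset.Ioc 0 n).filter (fun k => (c k : ℚ) ≤ t)).filter
          (fun k => (f k, c k) = y)) with hfibdef
      set m := fib.card with hmdef
      have hdens := density n hn0
      have hL1 : 1 ≤ L n := by
        by_contra h0
        have : L n = 0 := by omega
        rw [this] at hdens
        push_cast at hdens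
        linarith
      have hm1 : 1 ≤ m := by
        by_contra h0
        have : m = 0 := by omega
        rw [this, Nat.mul_zero] at hcon
        omega
      have hfibne : fib.Nonempty := Finset.card_pos.mp hm1
      set plast := fib.max' hfibne with hplastdef
      have hplastfib : plast ∈ fib := fib.max'_mem hfibne
      have hplastprops := Finset.mem_filter.mp hplastfib
      have hplastlow := Finset.mem_filter.mp hplastprops.1
      have hplasty : (f plast, c plast) = y := hplastprops.2
      have hplastIoc := Finset.mem_Ioc.mp hplastlow.1
      -- p0 is min over all k with property
      have hp0min : ∀ k ∈ fib, p0 ≤ k := by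
        intro k hk
        have hk' := Finset.mem_filter.mp hk
        exact Nat.find_min' hocc ⟨hk'.2, (Finset.mem_filter.mp hk'.1).2⟩
      have hp0plast : p0 ≤ plast := hp0min plast hplastfib
      -- m ≤ plast
      have hmplast : m ≤ plast := by
        have hsub : fib ⊆ Finset.Icc 1 plast := by
          intro k hk
          have hk' := Finset.mem_Ioc.mp (Finset.mem_filter.mp (Finset.mem_filter.mp hk).1).1
          exact Finset.mem_Icc.mpr ⟨by omega, fib.le_max' k hk⟩
        calc m ≤ (Finset.Icc 1 plast).card := Finset.card_le_card hsub
          _ = plast := by rw [Nat.card_Icc]; omega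
      -- plast ≥ N₁
      have hplastN₁ : N₁ ≤ plast := by
        have hmN : (N₁ : ℚ) ≤ m := by
          have hLm : (L n : ℚ) ≤ (K : ℚ) * m := by exact_mod_cast hcon
          nlinarith
        have : (N₁ : ℚ) ≤ (plast : ℚ) := by
          have : (m : ℚ) ≤ plast := by exact_mod_cast hmplast
          linarith
        exact_mod_cast this
      -- fiber minus p0 sits in W
      set W := (Finset.Ioc p0 plast).filter (fun k => (f k, c k) = y) with hWdef
      have hWm : m ≤ W.card + 1 := by
        have hsub : fib ⊆ insert p0 W := by
          intro k hk
          rcases eq_or_ne k p0 with rfl | hne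
          · exact Finset.mem_insert_self _ _
          · apply Finset.mem_insert_of_mem
            rw [hWdef]
            refine Finset.mem_filter.mpr ⟨Finset.mem_Ioc.mpr ⟨?_, fib.le_max' k hk⟩,
              (Finset.mem_filter.mp hk).2⟩
            have := hp0min k hk
            omega
        calc m ≤ (insert p0 W).card := Finset.card_le_card hsub
          _ ≤ W.card + 1 := Finset.card_insert_le _ _
      -- apply chain
      have hy2 : ((y.2 : ℕ) : ℚ) ≤ t := by
        have : c p0 = y.2 := congrArg Prod.snd hp0y
        rw [← this]
        exact hp0low
      have hchain := chain f c t y hy2 hbad plast p0 hp0y hplasty hp0plast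
      -- monotonicity of sum
      have hmono : ∑ k ∈ Finset.Ioc p0 plast, (c k : ℚ) ≤ ∑ k ∈ Finset.Ioc 0 plast, (c k : ℚ) := by
        apply Finset.sum_le_sum_of_subset_of_nonneg
        · intro k hk
          have := Finset.mem_Ioc.mp hk
          exact Finset.mem_Ioc.mpr ⟨by omega, this.2⟩
        · intro k _ _
          positivity
      have hub := hN₁ plast hplastN₁
      -- numeric finish
      have hWQ : (m : ℚ) - 1 ≤ (W.card : ℚ) := by
        have : (m : ℚ) ≤ (W.card : ℚ) + 1 := by exact_mod_cast hWm
        linarith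
      have e0 : t * ((plast : ℚ) - p0) + ((m : ℚ) - 1)/d ≤ (t + ε₁) * plast := by
        have h1 : ((m : ℚ) - 1)/d ≤ (W.card : ℚ)/d := div_le_div_of_nonneg_right hWQ hd.le
        have h2 := hchain.trans (hmono.trans hub)
        linarith
      have e1 : (m : ℚ) - 1 ≤ d * t * p0 + (δ/(2*K)) * plast := by
        have h3 : ((m : ℚ) - 1)/d ≤ t * p0 + ε₁ * plast := by nlinarith [e0]
        have h4 := mul_le_mul_of_nonneg_left h3 hd.le
        rw [mul_div_assoc'] at h4
        have h5 : d * ((m : ℚ) - 1) / d = (m : ℚ) - 1 := by field_simp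
        rw [h5] at h4
        calc (m : ℚ) - 1 ≤ d * (t * p0 + ε₁ * plast) := h4
          _ = d * t * p0 + (d * ε₁) * plast := by ring
          _ = d * t * p0 + (δ/(2*K)) * plast := by rw [hdε₁]
      -- combine: δn ≤ K m, m ≤ ..., plast ≤ n
      have hLm : (L n : ℚ) ≤ (K : ℚ) * m := by exact_mod_cast hcon
      have hplastn : (plast : ℚ) ≤ n := by exact_mod_cast hplastIoc.2
      have hp0Q : (0 : ℚ) ≤ p0 := by positivity
      have e2 : (δ/(2*K)) * plast ≤ (δ/(2*K)) * n :=
        mul_le_mul_of_nonneg_left hplastn (by positivity)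
      have e3 : (m : ℚ) - 1 ≤ d * t * p0 + (δ/(2*K)) * n := by linarith
      have e4 : δ * n ≤ (K : ℚ) * m := by linarith
      -- multiply e3 by 2K and combine with e4
      have e5 := mul_le_mul_of_nonneg_left e3 (by positivity : (0:ℚ) ≤ 2 * K)
      have e6 : 2 * (K : ℚ) * ((δ/(2*K)) * n) = δ * n := by
        field_simp
      have e9 : ((d*t*(p0:ℚ)+1)*(2*(K:ℚ))) = 2*K*(d*t*p0) + 2*K := by ring
      linarith [e5, e6, e4, hδn3, e9]
  -- combine: pick n large enough
  choose Ny hNy using main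
  set B := T.sup Ny with hBdef
  set n := max (max N₀ B) ⌈1/δ⌉₊ with hndef
  have hnN₀ : N₀ ≤ n := le_trans (le_max_left _ _) (le_max_left _ _)
  have hnB : B ≤ n := le_trans (le_max_right _ _) (le_max_left _ _)
  have hn1 : ⌈1/δ⌉₊ ≤ n := le_max_right _ _
  have hδn : (1 : ℚ) ≤ δ * n := by
    have h1 : (1/δ : ℚ) ≤ n := Nat.ceil_le.mp hn1
    have := (div_le_iff₀ hδpos).mp h1
    linarith [mul_comm δ (n : ℚ)]
  have hdens := density n hnN₀
  have hL1 : 1 ≤ L n := by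
    by_contra h0
    have hL0 : L n = 0 := by omega
    rw [hL0] at hdens
    push_cast at hdens
    linarith
  have hsne : ((Finset.Ioc 0 n).filter (fun k => (c k : ℚ) ≤ t)).Nonempty :=
    Finset.card_pos.mp hL1
  obtain ⟨y, hyT, hykey⟩ := pigeon (fun k => (f k, c k)) (hmapsto n) hsne
  exact hNy y n (le_trans (Finset.le_sup hyT) hnB) hnN₀ hykey


/-- Let `π` be a play of the expanded game `G'` from `(s_init, 0)` with
`MPsup(π) ≤ t`, and let `(γ_i)_{i≥0}` be its configuration sequence. Then there exist
`1 ≤ i ≤ j` such that `π_{[i,j]}` is a good cycle: writing `γ_k = (s_k, c_k)` for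
`i−1 ≤ k ≤ j`, we have `γ_{i−1} = γ_j`, `c_{i−1} ≤ t`, and
`(1/(j−i+1)) Σ_{k=i}^j c_k ≤ t`. -/
theorem statement5 {S : Type} [Fintype S] (G : Game S) (sinit : S) (t : ℚ) (ht : 0 ≤ t)
    (π : ℕ → WEdge (Conf S))
    (hplay : IsPlay (ExpE G t) (some (sinit, 0)) π)
    (hmp : LimsupLE (MP π) t) :
    ∃ i j, 1 ≤ i ∧ i ≤ j ∧
      ∃ cfg : ℕ → S × ℕ,
        (∀ k, i - 1 ≤ k → k ≤ j → StAt (some (sinit, 0)) π k = some (cfg k)) ∧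
        cfg (i - 1) = cfg j ∧
        ((cfg (i - 1)).2 : ℚ) ≤ t ∧
        (∑ k ∈ Finset.Icc i j, ((cfg k).2 : ℚ)) / ((j - i + 1 : ℕ) : ℚ) ≤ t := by
  classical
  obtain ⟨hE, hstart, hnext⟩ := hplay
  set γ : ℕ → Conf S := StAt (some (sinit, 0)) π with hγdef
  have hγ0 : γ 0 = some (sinit, 0) := rfl
  have hγsucc : ∀ k, γ (k + 1) = (π k).2.2 := fun k => rfl
  have hfst : ∀ k, (π k).1 = γ k := by
    intro k
    cases k with
    | zero => exact hstart
    | succ k => rw [hγsucc k]; exact (hnext k).symm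
  have hEk : ∀ k, (∃ (s : S) (c : ℕ) (w : ℤ) (s' : S) (c' : ℕ),
        (s, w, s') ∈ G.E ∧ (c : ℤ) + w = (c' : ℤ) ∧
        π k = (some (s, c), (c' : ℤ), some (s', c'))) ∨
      (∃ (s : S) (c : ℕ) (w : ℤ) (s' : S), (s, w, s') ∈ G.E ∧ (c : ℤ) + w < 0 ∧
        π k = (some (s, c), ⌈t⌉ + 1, (none : Conf S))) ∨
      π k = ((none : Conf S), ⌈t⌉ + 1, (none : Conf S)) := by
    intro k
    have := hE k
    simpa [ExpE, Set.mem_setOf_eq] using this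
  have hceil : (0 : ℤ) ≤ ⌈t⌉ := Int.ceil_nonneg ht
  have hw0 : ∀ k, 0 ≤ (π k).2.1 := by
    intro k
    rcases hEk k with ⟨s, c0, w, s', c', _, _, he⟩ | ⟨s, c0, w, s', _, _, he⟩ | he <;>
      rw [he] <;> simp <;> omega
  have hnone : ∀ k, γ k = none → (π k).2.1 = ⌈t⌉ + 1 ∧ γ (k + 1) = none := by
    intro k hk
    rcases hEk k with ⟨s, c0, w, s', c', _, _, he⟩ | ⟨s, c0, w, s', _, _, he⟩ | he
    · exfalso
      have h1 := hfst k
      rw [he, hk] at h1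
      simp at h1
    · exfalso
      have h1 := hfst k
      rw [he, hk] at h1
      simp at h1
    · rw [hγsucc k, he]
      exact ⟨rfl, rfl⟩
  have hbot : ∀ k, γ k ≠ none := by
    intro k0 hk0
    have hall : ∀ j, γ (k0 + j) = none := by
      intro j
      induction j with
      | zero => exact hk0
      | succ j ih => exact (hnone _ ih).2
    have hwconst : ∀ j, k0 ≤ j → (π j).2.1 = ⌈t⌉ + 1 := by
      intro j hj
      obtain ⟨i, rfl⟩ := Nat.exists_eq_add_of_le hj
      exact (hnone _ (hall i)).1
    obtain ⟨N, hN⟩ := hmp (1/2) (by norm_num)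
    set n := max (max N 1) (2 * k0 * (⌈t⌉.toNat + 1) + 1) with hndef
    have hnN : N ≤ n := le_trans (le_max_left _ _) (le_max_left _ _)
    have hn1 : 1 ≤ n := le_trans (le_max_right _ _) (le_max_left _ _)
    have hnk : 2 * k0 * (⌈t⌉.toNat + 1) + 1 ≤ n := le_max_right _ _
    have hk0n : k0 ≤ n := by
      have h5 : k0 ≤ 2 * k0 * (⌈t⌉.toNat + 1) + 1 := by nlinarith [Nat.zero_le k0]
      exact le_trans h5 hnk
    have hEL : ((n - k0 : ℕ) : ℤ) * (⌈t⌉ + 1) ≤ EL π n := by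
      have hsub : Finset.Ico k0 n ⊆ Finset.range n := by
        intro x hx
        simp only [Finset.mem_Ico, Finset.mem_range] at *
        omega
      have h1 : ∑ i ∈ Finset.Ico k0 n, (π i).2.1 ≤ ∑ i ∈ Finset.range n, (π i).2.1 :=
        Finset.sum_le_sum_of_subset_of_nonneg hsub (fun i _ _ => hw0 i)
      have h2 : ∑ i ∈ Finset.Ico k0 n, (π i).2.1 = ((n - k0 : ℕ) : ℤ) * (⌈t⌉ + 1) := by
        rw [Finset.sum_congr rfl (fun i hi => hwconst i (Finset.mem_Ico.mp hi).1),
          Finset.sum_const, Nat.card_Ico, nsmul_eq_mul]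
      rw [← h2]
      exact h1
    have hMP := hN n hnN
    rw [MP] at hMP
    have hnQ : (0 : ℚ) < n := by exact_mod_cast hn1
    have hELQ : ((EL π n : ℤ) : ℚ) ≤ (t + 1/2) * n := by
      rw [div_le_iff₀ hnQ] at hMP
      exact hMP
    have hlow : (((n - k0 : ℕ) : ℚ)) * ((⌈t⌉ : ℚ) + 1) ≤ ((EL π n : ℤ) : ℚ) := by
      exact_mod_cast hEL
    have hcast1 : ((n - k0 : ℕ) : ℚ) = (n : ℚ) - k0 := by
      rw [Nat.cast_sub hk0n]
    have hceilt : t ≤ (⌈t⌉ : ℚ) := Int.le_ceil t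
    have hceilto : ((⌈t⌉ : ℚ)) ≤ ((⌈t⌉.toNat : ℕ) : ℚ) := by
      exact_mod_cast Int.self_le_toNat _
    have hnkQ : 2 * (k0 : ℚ) * ((⌈t⌉.toNat : ℕ) + 1) + 1 ≤ n := by
      exact_mod_cast hnk
    have hk0Q : (0 : ℚ) ≤ k0 := by positivity
    nlinarith [hlow, hELQ, hcast1, hceilt, hceilto, hnkQ, hk0Q, hnQ,
      mul_le_mul_of_nonneg_left hceilt hk0Q]
  set cfg : ℕ → S × ℕ := fun k => (γ k).getD (sinit, 0) with hcfgdef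
  have hcfg : ∀ k, γ k = some (cfg k) := by
    intro k
    cases hγk : γ k with
    | none => exact absurd hγk (hbot k)
    | some v => rw [hcfgdef]; simp [hγk]
  have hwk : ∀ k, (π k).2.1 = ((cfg (k + 1)).2 : ℤ) := by
    intro k
    rcases hEk k with ⟨s, c0, w, s', c', _, _, he⟩ | ⟨s, c0, w, s', _, _, he⟩ | he
    · have h2 : γ (k + 1) = some (s', c') := by rw [hγsucc k, he]
      rw [hcfg (k + 1)] at h2
      have h3 : cfg (k + 1) = (s', c') := Option.some_injective _ h2
      rw [he, h3]
    · exfalso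
      have h2 : γ (k + 1) = none := by rw [hγsucc k, he]
      rw [hcfg (k + 1)] at h2
      simp at h2
    · exfalso
      have h2 : γ (k + 1) = none := by rw [hγsucc k, he]
      rw [hcfg (k + 1)] at h2
      simp at h2
  have hmp' : ∀ ε : ℚ, 0 < ε → ∃ N, ∀ n ≥ N,
      (∑ k ∈ Finset.Ioc 0 n, (((cfg k).2 : ℕ) : ℚ)) ≤ (t + ε) * n := by
    intro ε hε
    obtain ⟨N, hN⟩ := hmp ε hε
    refine ⟨max N 1, fun n hn => ?_⟩
    have h1 := hN n (le_trans (le_max_left _ _) hn)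
    rw [MP] at h1
    have hn1 : 1 ≤ n := le_trans (le_max_right _ _) hn
    have hnQ : (0 : ℚ) < n := by exact_mod_cast hn1
    rw [div_le_iff₀ hnQ] at h1
    have hELeq : ((EL π n : ℤ) : ℚ) = ∑ k ∈ Finset.Ioc 0 n, ((cfg k).2 : ℚ) := by
      have h2 : EL π n = ∑ i ∈ Finset.range n, ((cfg (i + 1)).2 : ℤ) :=
        Finset.sum_congr rfl (fun i _ => hwk i)
      rw [h2, ← sum_shift (fun k => ((cfg k).2 : ℚ)) n]
      push_cast
      ring
    rw [← hELeq]
    exact h1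
  have hcore := core (fun k => (cfg k).1) (fun k => (cfg k).2) t ht hmp'
  obtain ⟨a, b, hab, hf, hc, hle, hsum⟩ := hcore
  refine ⟨a + 1, b, by omega, by omega, cfg, ?_, ?_, ?_, ?_⟩
  · intro k _ _
    exact hcfg k
  · rw [Nat.add_sub_cancel]
    exact Prod.ext hf hc
  · rw [Nat.add_sub_cancel]
    exact hle
  · have hIcc : Finset.Icc (a + 1) b = Finset.Ioc a b := Finset.Icc_add_one_left_eq_Ioc a b
    have hjb : b - (a + 1) + 1 = b - a := by omega
    have hbapos : (0 : ℚ) < ((b - a : ℕ) : ℚ) := by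
      have : 0 < b - a := by omega
      exact_mod_cast this
    rw [hIcc, hjb, div_le_iff₀ hbapos]
    have hcastba : ((b - a : ℕ) : ℚ) = (b : ℚ) - a := by
      rw [Nat.cast_sub (le_of_lt hab)]
    rw [hcastba]
    exact hsum


end AvgEnergy
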